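/- Let ρ_χ(p) = p |Ψ⟩⟨Ψ| + (1−p) |00⟩⟨00|⊗(I₂/2) with |Ψ⟩ = cos(π/8)|000⟩ + sin(π/8)|111⟩ and 0 ≤ p ≤ 1. Then (i) for all unit vectors a, a', b, b', c, c' ∈ ℝ³ the Svetlichny operator S satisfies |tr(S ρ_χ(p))| ≤ 4p, and (ii) there exist unit vectors a, a', b, b', c, c' ∈ ℝ³ with tr(S ρ_χ(p)) = 4p; in particular, since 4p ≤ 4 for p ≤ 1, ρ_χ(p) never violates the Svetlichny inequality |tr(Sρ)| ≤ 4. -/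

import Mathlib

open Matrix
open scoped Kronecker ComplexOrder

/-- The Pauli matrices σ₁, σ₂, σ₃ (indexed by `Fin 3`). -/
noncomputable def pauli : Fin 3 → Matrix (Fin 2) (Fin 2) ℂ :=
  ![!![0, 1; 1, 0], !![0, -Complex.I; Complex.I, 0], !![1, 0; 0, -1]]

/-- The observable `G = g₁σ₁ + g₂σ₂ + g₃σ₃` associated to a real vector `g ∈ ℝ³`. -/
noncomputable def obs (g : Fin 3 → ℝ) : Matrix (Fin 2) (Fin 2) ℂ :=
  ∑ i : Fin 3, ((g i : ℝ) : ℂ) • pauli i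

/-- The Svetlichny operator built from the unit vectors `a, a', b, b', c, c' ∈ ℝ³`. -/
noncomputable def svetlichny (a a' b b' c c' : Fin 3 → ℝ) :
    Matrix (Fin 2 × Fin 2 × Fin 2) (Fin 2 × Fin 2 × Fin 2) ℂ :=
  obs a ⊗ₖ ((obs b + obs b') ⊗ₖ obs c + (obs b - obs b') ⊗ₖ obs c')
    + obs a' ⊗ₖ ((obs b - obs b') ⊗ₖ obs c - (obs b + obs b') ⊗ₖ obs c')

/-- The vector `|Ψ⟩ = cos(π/8)|000⟩ + sin(π/8)|111⟩`. -/
noncomputable def psiChi : Fin 2 × Fin 2 × Fin 2 → ℂ :=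
  fun x => if x = (0, 0, 0) then ((Real.cos (Real.pi / 8) : ℝ) : ℂ)
    else if x = (1, 1, 1) then ((Real.sin (Real.pi / 8) : ℝ) : ℂ) else 0

/-- The rank-one projector `|0⟩⟨0|`. -/
noncomputable def E00 : Matrix (Fin 2) (Fin 2) ℂ := !![1, 0; 0, 0]

/-- The state `ρ_χ(p) = p|Ψ⟩⟨Ψ| + (1-p)|00⟩⟨00| ⊗ I₂/2`. -/
noncomputable def rhoChi (p : ℝ) :
    Matrix (Fin 2 × Fin 2 × Fin 2) (Fin 2 × Fin 2 × Fin 2) ℂ :=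
  (p : ℂ) • Matrix.vecMulVec psiChi (star psiChi)
    + ((1 - p : ℝ) : ℂ) • (E00 ⊗ₖ (E00 ⊗ₖ (((2 : ℂ))⁻¹ • (1 : Matrix (Fin 2) (Fin 2) ℂ))))
lemma tr_kron (p : ℝ) (X Y Z : Matrix (Fin 2) (Fin 2) ℂ) :
    ((X ⊗ₖ (Y ⊗ₖ Z)) * rhoChi p).trace =
      (p : ℂ) * (((Real.cos (Real.pi/8) : ℝ) : ℂ) ^ 2 * (X 0 0 * Y 0 0 * Z 0 0)
        + ((Real.sin (Real.pi/8) : ℝ) : ℂ) ^ 2 * (X 1 1 * Y 1 1 * Z 1 1)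
        + ((Real.cos (Real.pi/8) : ℝ) : ℂ) * ((Real.sin (Real.pi/8) : ℝ) : ℂ)
            * (X 0 1 * Y 0 1 * Z 0 1 + X 1 0 * Y 1 0 * Z 1 0))
      + ((1 - p : ℝ) : ℂ) / 2 * (X 0 0 * Y 0 0 * (Z 0 0 + Z 1 1)) := by
  simp [rhoChi, Matrix.trace, Matrix.mul_apply, Matrix.vecMulVec_apply,
    Fintype.sum_prod_type, Fin.sum_univ_two, psiChi, E00, Matrix.one_apply,
    Prod.ext_iff, map_ofNat]
  ring
lemma obs00 (g : Fin 3 → ℝ) : obs g 0 0 = ((g 2 : ℝ) : ℂ) := by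
  simp [obs, pauli, Fin.sum_univ_three]
lemma obs01 (g : Fin 3 → ℝ) : obs g 0 1 = ((g 0 : ℝ) : ℂ) - ((g 1 : ℝ) : ℂ) * Complex.I := by
  simp [obs, pauli, Fin.sum_univ_three]; ring
lemma obs10 (g : Fin 3 → ℝ) : obs g 1 0 = ((g 0 : ℝ) : ℂ) + ((g 1 : ℝ) : ℂ) * Complex.I := by
  simp [obs, pauli, Fin.sum_univ_three]
lemma obs11 (g : Fin 3 → ℝ) : obs g 1 1 = -((g 2 : ℝ) : ℂ) := by
  simp [obs, pauli, Fin.sum_univ_three]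

/-- z-part of the three-party correlation. -/
def Zf (x y z : Fin 3 → ℝ) : ℝ := x 2 * y 2 * z 2
/-- xy-part of the three-party correlation. -/
def Wf (x y z : Fin 3 → ℝ) : ℝ :=
  (x 0 * y 0 - x 1 * y 1) * z 0 - (x 0 * y 1 + x 1 * y 0) * z 1

def ZS (a a' b b' c c' : Fin 3 → ℝ) : ℝ :=
  Zf a (b + b') c + Zf a (b - b') c' + Zf a' (b - b') c - Zf a' (b + b') c'
def WS (a a' b b' c c' : Fin 3 → ℝ) : ℝ :=
  Wf a (b + b') c + Wf a (b - b') c' + Wf a' (b - b') c - Wf a' (b + b') c'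

lemma tr_svet (p : ℝ) (a a' b b' c c' : Fin 3 → ℝ) :
    (svetlichny a a' b b' c c' * rhoChi p).trace =
      ((p * ((Real.cos (Real.pi/8) ^ 2 - Real.sin (Real.pi/8) ^ 2) * ZS a a' b b' c c'
        + 2 * Real.cos (Real.pi/8) * Real.sin (Real.pi/8) * WS a a' b b' c c') : ℝ) : ℂ) := by
  have hdist : svetlichny a a' b b' c c' =
      obs a ⊗ₖ ((obs b + obs b') ⊗ₖ obs c) + obs a ⊗ₖ ((obs b - obs b') ⊗ₖ obs c')
      + (obs a' ⊗ₖ ((obs b - obs b') ⊗ₖ obs c) - obs a' ⊗ₖ ((obs b + obs b') ⊗ₖ obs c')) := by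
    ext ⟨i, j, k⟩ ⟨i', j', k'⟩
    simp [svetlichny, Matrix.kroneckerMap_apply, Matrix.add_apply, Matrix.sub_apply]
    ring
  rw [hdist, Matrix.add_mul, Matrix.add_mul, Matrix.sub_mul, Matrix.trace_add,
    Matrix.trace_add, Matrix.trace_sub, tr_kron, tr_kron, tr_kron, tr_kron]
  simp only [Matrix.add_apply, Matrix.sub_apply, obs00, obs01, obs10, obs11,
    ZS, WS, Zf, Wf, Pi.add_apply, Pi.sub_apply]
  push_cast
  ring_nf
  simp only [Complex.I_sq]
  ring
/-- Cauchy–Schwarz in ℝ³, product form. -/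
lemma cs3' (u1 u2 u3 w1 w2 w3 : ℝ) :
    u1*w1 + u2*w2 + u3*w3 ≤ Real.sqrt (u1^2+u2^2+u3^2) * Real.sqrt (w1^2+w2^2+w3^2) := by
  have h : (u1*w1 + u2*w2 + u3*w3)^2 ≤ (u1^2+u2^2+u3^2) * (w1^2+w2^2+w3^2) := by
    nlinarith [sq_nonneg (u1*w2 - u2*w1), sq_nonneg (u1*w3 - u3*w1), sq_nonneg (u2*w3 - u3*w2)]
  calc u1*w1 + u2*w2 + u3*w3 ≤ |u1*w1 + u2*w2 + u3*w3| := le_abs_self _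
    _ = Real.sqrt ((u1*w1 + u2*w2 + u3*w3)^2) := (Real.sqrt_sq_eq_abs _).symm
    _ ≤ Real.sqrt ((u1^2+u2^2+u3^2) * (w1^2+w2^2+w3^2)) := Real.sqrt_le_sqrt h
    _ = _ := Real.sqrt_mul (by positivity) _

/-- Cauchy–Schwarz in ℝ³ with a unit vector, absolute-value form. -/
lemma cs3 (u1 u2 u3 c1 c2 c3 : ℝ) (hc : c1^2+c2^2+c3^2 = 1) :
    |u1*c1 + u2*c2 + u3*c3| ≤ Real.sqrt (u1^2+u2^2+u3^2) := by
  have h : (u1*c1 + u2*c2 + u3*c3)^2 ≤ (u1^2+u2^2+u3^2) * (c1^2+c2^2+c3^2) := by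
    nlinarith [sq_nonneg (u1*c2 - u2*c1), sq_nonneg (u1*c3 - u3*c1), sq_nonneg (u2*c3 - u3*c2)]
  calc |u1*c1 + u2*c2 + u3*c3| = Real.sqrt ((u1*c1 + u2*c2 + u3*c3)^2) :=
        (Real.sqrt_sq_eq_abs _).symm
    _ ≤ Real.sqrt (u1^2+u2^2+u3^2) := Real.sqrt_le_sqrt (by rw [hc] at h; linarith)

/-- Triangle inequality in ℝ³. -/
lemma tri3 (u1 u2 u3 w1 w2 w3 : ℝ) :
    Real.sqrt ((u1+w1)^2 + (u2+w2)^2 + (u3+w3)^2)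
      ≤ Real.sqrt (u1^2+u2^2+u3^2) + Real.sqrt (w1^2+w2^2+w3^2) := by
  have hu : Real.sqrt (u1^2+u2^2+u3^2) ^ 2 = u1^2+u2^2+u3^2 := Real.sq_sqrt (by positivity)
  have hw : Real.sqrt (w1^2+w2^2+w3^2) ^ 2 = w1^2+w2^2+w3^2 := Real.sq_sqrt (by positivity)
  have h := cs3' u1 u2 u3 w1 w2 w3
  have key : (u1+w1)^2 + (u2+w2)^2 + (u3+w3)^2
      ≤ (Real.sqrt (u1^2+u2^2+u3^2) + Real.sqrt (w1^2+w2^2+w3^2))^2 := by nlinarith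
  calc Real.sqrt ((u1+w1)^2 + (u2+w2)^2 + (u3+w3)^2)
      ≤ Real.sqrt ((Real.sqrt (u1^2+u2^2+u3^2) + Real.sqrt (w1^2+w2^2+w3^2))^2) :=
        Real.sqrt_le_sqrt key
    _ = _ := Real.sqrt_sq (by positivity)

/-- Contraction: the "observable image" of a unit vector `x` on `y` has norm `≤ ‖y‖`. -/
lemma wle (x0 x1 x2 y0 y1 y2 : ℝ) (hx : x0^2 + x1^2 + x2^2 = 1) :
    Real.sqrt ((x0*y0 - x1*y1)^2 + (-(x0*y1 + x1*y0))^2 + (x2*y2)^2)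
      ≤ Real.sqrt (y0^2 + y1^2 + y2^2) := by
  apply Real.sqrt_le_sqrt
  nlinarith [sq_nonneg (x2*y0), sq_nonneg (x2*y1), sq_nonneg y2, sq_nonneg x2,
    sq_nonneg x0, sq_nonneg x1, sq_nonneg (x0*y0), sq_nonneg (x1*y1)]

lemma sum_sqrt_le (U V : ℝ) (hU : 0 ≤ U) (hV : 0 ≤ V) (h : U + V = 4) :
    Real.sqrt U + Real.sqrt V ≤ 2 * Real.sqrt 2 := by
  have hu : Real.sqrt U ^ 2 = U := Real.sq_sqrt hU
  have hv : Real.sqrt V ^ 2 = V := Real.sq_sqrt hV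
  have h2 : Real.sqrt 2 ^ 2 = 2 := Real.sq_sqrt (by norm_num)
  nlinarith [sq_nonneg (Real.sqrt U - Real.sqrt V), Real.sqrt_nonneg U, Real.sqrt_nonneg V,
    Real.sqrt_nonneg 2, sq_nonneg (Real.sqrt U + Real.sqrt V - 2 * Real.sqrt 2)]

/-- Core chaining lemma. -/
lemma core (P0 P1 P2 Q0 Q1 Q2 R0 R1 R2 S0 S1 S2 c0 c1 c2 C0 C1 C2 nU nV : ℝ)
    (hc : c0^2+c1^2+c2^2 = 1) (hc' : C0^2+C1^2+C2^2 = 1)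
    (hP : Real.sqrt (P0^2+P1^2+P2^2) ≤ nU) (hQ : Real.sqrt (Q0^2+Q1^2+Q2^2) ≤ nV)
    (hR : Real.sqrt (R0^2+R1^2+R2^2) ≤ nV) (hS : Real.sqrt (S0^2+S1^2+S2^2) ≤ nU)
    (hUV : nU + nV ≤ 2 * Real.sqrt 2) :
    |((P0+Q0)*c0 + (P1+Q1)*c1 + (P2+Q2)*c2)
      + ((R0-S0)*C0 + (R1-S1)*C1 + (R2-S2)*C2)| ≤ 4 * Real.sqrt 2 := by
  have h1 := cs3 (P0+Q0) (P1+Q1) (P2+Q2) c0 c1 c2 hc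
  have h2 := cs3 (R0-S0) (R1-S1) (R2-S2) C0 C1 C2 hc'
  have t1 := tri3 P0 P1 P2 Q0 Q1 Q2
  have t2 : Real.sqrt ((R0-S0)^2 + (R1-S1)^2 + (R2-S2)^2)
      ≤ Real.sqrt (R0^2+R1^2+R2^2) + Real.sqrt (S0^2+S1^2+S2^2) := by
    have h := tri3 R0 R1 R2 (-S0) (-S1) (-S2)
    rw [show (R0 + -S0)^2 + (R1 + -S1)^2 + (R2 + -S2)^2
        = (R0-S0)^2 + (R1-S1)^2 + (R2-S2)^2 by ring,
      show (-S0)^2 + (-S1)^2 + (-S2)^2 = S0^2+S1^2+S2^2 by ring] at h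
    exact h
  have habs := abs_add_le (((P0+Q0)*c0 + (P1+Q1)*c1 + (P2+Q2)*c2))
      (((R0-S0)*C0 + (R1-S1)*C1 + (R2-S2)*C2))
  linarith
set_option maxHeartbeats 1000000 in
/-- Key bound: the Svetlichny combination is at most `4√2` in absolute value. -/
lemma keyR (a a' b b' c c' : Fin 3 → ℝ)
    (ha : ∑ i : Fin 3, a i ^ 2 = 1) (ha' : ∑ i : Fin 3, a' i ^ 2 = 1)
    (hb : ∑ i : Fin 3, b i ^ 2 = 1) (hb' : ∑ i : Fin 3, b' i ^ 2 = 1)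
    (hc : ∑ i : Fin 3, c i ^ 2 = 1) (hc' : ∑ i : Fin 3, c' i ^ 2 = 1) :
    |ZS a a' b b' c c' + WS a a' b b' c c'| ≤ 4 * Real.sqrt 2 := by
  simp only [Fin.sum_univ_three] at ha ha' hb hb' hc hc'
  have hP := wle (a 0) (a 1) (a 2) (b 0 + b' 0) (b 1 + b' 1) (b 2 + b' 2) ha
  have hQ := wle (a' 0) (a' 1) (a' 2) (b 0 - b' 0) (b 1 - b' 1) (b 2 - b' 2) ha'
  have hR := wle (a 0) (a 1) (a 2) (b 0 - b' 0) (b 1 - b' 1) (b 2 - b' 2) ha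
  have hS := wle (a' 0) (a' 1) (a' 2) (b 0 + b' 0) (b 1 + b' 1) (b 2 + b' 2) ha'
  have hUV := sum_sqrt_le ((b 0 + b' 0)^2 + (b 1 + b' 1)^2 + (b 2 + b' 2)^2)
      ((b 0 - b' 0)^2 + (b 1 - b' 1)^2 + (b 2 - b' 2)^2)
      (by positivity) (by positivity) (by nlinarith [hb, hb'])
  have h := core
    (a 0*(b 0 + b' 0) - a 1*(b 1 + b' 1)) (-(a 0*(b 1 + b' 1) + a 1*(b 0 + b' 0)))
      (a 2*(b 2 + b' 2))
    (a' 0*(b 0 - b' 0) - a' 1*(b 1 - b' 1)) (-(a' 0*(b 1 - b' 1) + a' 1*(b 0 - b' 0)))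
      (a' 2*(b 2 - b' 2))
    (a 0*(b 0 - b' 0) - a 1*(b 1 - b' 1)) (-(a 0*(b 1 - b' 1) + a 1*(b 0 - b' 0)))
      (a 2*(b 2 - b' 2))
    (a' 0*(b 0 + b' 0) - a' 1*(b 1 + b' 1)) (-(a' 0*(b 1 + b' 1) + a' 1*(b 0 + b' 0)))
      (a' 2*(b 2 + b' 2))
    (c 0) (c 1) (c 2) (c' 0) (c' 1) (c' 2) _ _ hc hc' hP hQ hR hS hUV
  calc |ZS a a' b b' c c' + WS a a' b b' c c'|
      = |((a 0*(b 0 + b' 0) - a 1*(b 1 + b' 1) + (a' 0*(b 0 - b' 0) - a' 1*(b 1 - b' 1)))*c 0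
          + (-(a 0*(b 1 + b' 1) + a 1*(b 0 + b' 0)) + -(a' 0*(b 1 - b' 1) + a' 1*(b 0 - b' 0)))*c 1
          + (a 2*(b 2 + b' 2) + a' 2*(b 2 - b' 2))*c 2)
          + ((a 0*(b 0 - b' 0) - a 1*(b 1 - b' 1) - (a' 0*(b 0 + b' 0) - a' 1*(b 1 + b' 1)))*c' 0
          + (-(a 0*(b 1 - b' 1) + a 1*(b 0 - b' 0)) - -(a' 0*(b 1 + b' 1) + a' 1*(b 0 + b' 0)))*c' 1
          + (a 2*(b 2 - b' 2) - a' 2*(b 2 + b' 2))*c' 2)| := by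
        rw [show ZS a a' b b' c c' + WS a a' b b' c c'
          = ((a 0*(b 0 + b' 0) - a 1*(b 1 + b' 1) + (a' 0*(b 0 - b' 0) - a' 1*(b 1 - b' 1)))*c 0
          + (-(a 0*(b 1 + b' 1) + a 1*(b 0 + b' 0)) + -(a' 0*(b 1 - b' 1) + a' 1*(b 0 - b' 0)))*c 1
          + (a 2*(b 2 + b' 2) + a' 2*(b 2 - b' 2))*c 2)
          + ((a 0*(b 0 - b' 0) - a 1*(b 1 - b' 1) - (a' 0*(b 0 + b' 0) - a' 1*(b 1 + b' 1)))*c' 0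
          + (-(a 0*(b 1 - b' 1) + a 1*(b 0 - b' 0)) - -(a' 0*(b 1 + b' 1) + a' 1*(b 0 + b' 0)))*c' 1
          + (a 2*(b 2 - b' 2) - a' 2*(b 2 + b' 2))*c' 2) by
            simp only [ZS, WS, Zf, Wf, Pi.add_apply, Pi.sub_apply]; ring]
    _ ≤ 4 * Real.sqrt 2 := h
lemma hcossq : Real.cos (Real.pi/8) ^ 2 - Real.sin (Real.pi/8) ^ 2 = Real.sqrt 2 / 2 := by
  have h := Real.cos_two_mul (Real.pi/8)
  have h2 := Real.sin_sq_add_cos_sq (Real.pi/8)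
  rw [show (2:ℝ) * (Real.pi/8) = Real.pi/4 by ring, Real.cos_pi_div_four] at h
  linarith

lemma hsincos : 2 * Real.cos (Real.pi/8) * Real.sin (Real.pi/8) = Real.sqrt 2 / 2 := by
  have h := Real.sin_two_mul (Real.pi/8)
  rw [show (2:ℝ) * (Real.pi/8) = Real.pi/4 by ring, Real.sin_pi_div_four] at h
  linarith


/-- (i) Every Svetlichny operator mean value on `ρ_χ(p)` is bounded by `4p`;
(ii) the bound `4p` is attained; in particular `ρ_χ(p)` never violates the
Svetlichny inequality `|tr(Sρ)| ≤ 4`. -/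
theorem svetlichny_rhoChi (p : ℝ) (hp0 : 0 ≤ p) (hp1 : p ≤ 1) :
    (∀ a a' b b' c c' : Fin 3 → ℝ,
      (∑ i : Fin 3, a i ^ 2 = 1) → (∑ i : Fin 3, a' i ^ 2 = 1) →
      (∑ i : Fin 3, b i ^ 2 = 1) → (∑ i : Fin 3, b' i ^ 2 = 1) →
      (∑ i : Fin 3, c i ^ 2 = 1) → (∑ i : Fin 3, c' i ^ 2 = 1) →
      ‖(svetlichny a a' b b' c c' * rhoChi p).trace‖ ≤ 4 * p)
    ∧ (∃ a a' b b' c c' : Fin 3 → ℝ,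
      (∑ i : Fin 3, a i ^ 2 = 1) ∧ (∑ i : Fin 3, a' i ^ 2 = 1) ∧
      (∑ i : Fin 3, b i ^ 2 = 1) ∧ (∑ i : Fin 3, b' i ^ 2 = 1) ∧
      (∑ i : Fin 3, c i ^ 2 = 1) ∧ (∑ i : Fin 3, c' i ^ 2 = 1) ∧
      (svetlichny a a' b b' c c' * rhoChi p).trace = ((4 * p : ℝ) : ℂ))
    ∧ (∀ a a' b b' c c' : Fin 3 → ℝ,
      (∑ i : Fin 3, a i ^ 2 = 1) → (∑ i : Fin 3, a' i ^ 2 = 1) →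
      (∑ i : Fin 3, b i ^ 2 = 1) → (∑ i : Fin 3, b' i ^ 2 = 1) →
      (∑ i : Fin 3, c i ^ 2 = 1) → (∑ i : Fin 3, c' i ^ 2 = 1) →
      ‖(svetlichny a a' b b' c c' * rhoChi p).trace‖ ≤ 4) := by
  have hs : Real.sqrt 2 * Real.sqrt 2 = 2 := Real.mul_self_sqrt (by norm_num)
  have part1 : ∀ a a' b b' c c' : Fin 3 → ℝ,
      (∑ i : Fin 3, a i ^ 2 = 1) → (∑ i : Fin 3, a' i ^ 2 = 1) →
      (∑ i : Fin 3, b i ^ 2 = 1) → (∑ i : Fin 3, b' i ^ 2 = 1) →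
      (∑ i : Fin 3, c i ^ 2 = 1) → (∑ i : Fin 3, c' i ^ 2 = 1) →
      ‖(svetlichny a a' b b' c c' * rhoChi p).trace‖ ≤ 4 * p := by
    intro a a' b b' c c' ha ha' hb hb' hc hc'
    rw [tr_svet, hcossq, hsincos, Complex.norm_real, Real.norm_eq_abs]
    have hk := keyR a a' b b' c c' ha ha' hb hb' hc hc'
    rw [show p * (Real.sqrt 2 / 2 * ZS a a' b b' c c' + Real.sqrt 2 / 2 * WS a a' b b' c c')
        = (p * (Real.sqrt 2 / 2)) * (ZS a a' b b' c c' + WS a a' b b' c c') by ring,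
      abs_mul, abs_of_nonneg (by positivity : (0:ℝ) ≤ p * (Real.sqrt 2 / 2))]
    calc p * (Real.sqrt 2 / 2) * |ZS a a' b b' c c' + WS a a' b b' c c'|
        ≤ p * (Real.sqrt 2 / 2) * (4 * Real.sqrt 2) :=
          mul_le_mul_of_nonneg_left hk (by positivity)
      _ = 4 * p := by nlinarith [hs]
  refine ⟨part1, ?_, fun a a' b b' c c' ha ha' hb hb' hc hc' =>
    le_trans (part1 a a' b b' c c' ha ha' hb hb' hc hc') (by linarith)⟩
  refine ⟨![1,0,0], ![0,1,0], ![1,0,0], ![0,1,0],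
    ![Real.sqrt 2/2, -(Real.sqrt 2/2), 0], ![Real.sqrt 2/2, Real.sqrt 2/2, 0],
    ?_, ?_, ?_, ?_, ?_, ?_, ?_⟩
  · norm_num [Fin.sum_univ_three, Matrix.cons_val_two]
  · norm_num [Fin.sum_univ_three, Matrix.cons_val_two]
  · norm_num [Fin.sum_univ_three, Matrix.cons_val_two]
  · norm_num [Fin.sum_univ_three, Matrix.cons_val_two]
  · norm_num [Fin.sum_univ_three, Matrix.cons_val_two]; nlinarith [hs]
  · norm_num [Fin.sum_univ_three, Matrix.cons_val_two]; nlinarith [hs]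
  · rw [tr_svet, hcossq, hsincos]
    norm_cast
    simp only [ZS, WS, Zf, Wf, Pi.add_apply, Pi.sub_apply]
    norm_num [Matrix.cons_val_two]
    nlinarith [hs]
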